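/- Let a > 0, ε ≥ 0, and let g : ℝ → ℝ be continuous with sign condition x·g(x) ≥ 0, |g| nondecreasing in |x|, and |g(x)| > ε for all |x| > δ for some δ > 0. Consider the planar system ẋ₂ = -x₃, ẋ₃ = -a·x₃ + v(t) with disturbance |v(t) - g(x₂(t))| ≤ ε. If there exists a radially unbounded C¹ function V with V̇ ≤ 0 outside a ball of radius r, then all solutions are uniformly ultimately bounded. -/

import Mathlib

/-- derivative of x ↦ √(θ²+x²) -/
lemma aux_hasDerivAt_sqrtcomp (th y : ℝ) (hth : 0 < th) :
    HasDerivAt (fun x : ℝ => Real.sqrt (th^2 + x^2)) (y / Real.sqrt (th^2 + y^2)) y := by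
  have hpos : 0 < th^2 + y^2 := by positivity
  have hsq : HasDerivAt (fun x : ℝ => th^2 + x^2) (2*y) y := by
    simpa using (hasDerivAt_pow 2 y).const_add (th^2)
  have h := (Real.hasDerivAt_sqrt (ne_of_gt hpos)).comp y hsq
  have hr : Real.sqrt (th^2 + y^2) > 0 := Real.sqrt_pos.2 hpos
  refine h.congr_deriv ?_
  field_simp

/-- derivative of sat x = x / √(θ²+x²) -/
lemma aux_hasDerivAt_sat (th y : ℝ) (hth : 0 < th) :
    HasDerivAt (fun x : ℝ => x / Real.sqrt (th^2 + x^2))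
      (th^2 / ((th^2 + y^2) * Real.sqrt (th^2 + y^2))) y := by
  have hpos : 0 < th^2 + y^2 := by positivity
  have hr : 0 < Real.sqrt (th^2 + y^2) := Real.sqrt_pos.2 hpos
  have h := (hasDerivAt_id y).div (aux_hasDerivAt_sqrtcomp th y hth) (ne_of_gt hr)
  refine h.congr_deriv ?_
  have hsq : (Real.sqrt (th^2+y^2))^2 = th^2 + y^2 := Real.sq_sqrt hpos.le
  simp only [id]
  field_simp
  nlinarith [hsq, hr]

/-- |sat| ≤ 1 -/
lemma aux_sat_le_one (th y : ℝ) (hth : 0 < th) : |y / Real.sqrt (th^2 + y^2)| ≤ 1 := by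
  have hpos : 0 < th^2 + y^2 := by positivity
  have hr : 0 < Real.sqrt (th^2 + y^2) := Real.sqrt_pos.2 hpos
  rw [abs_div, abs_of_pos hr, div_le_one hr]
  have : |y| = Real.sqrt (y^2) := (Real.sqrt_sq_eq_abs y).symm
  rw [this]
  exact Real.sqrt_le_sqrt (by nlinarith)

/-- If φ' = f, φ u ≤ C, and f ≤ 0 whenever φ > C on (u, v], then φ v ≤ C. -/
lemma aux_inv (φ f : ℝ → ℝ) (hφ : ∀ t, HasDerivAt φ (f t) t) (C u v : ℝ)
    (huv : u ≤ v) (hu : φ u ≤ C)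
    (hstep : ∀ t, u < t → t ≤ v → C < φ t → f t ≤ 0) : φ v ≤ C := by
  by_contra hcon
  push_neg at hcon
  have hcont : Continuous φ := by
    apply continuous_iff_continuousAt.2
    exact fun t => (hφ t).continuousAt
  set A : Set ℝ := {τ | τ ∈ Set.Icc u v ∧ φ τ ≤ C} with hA
  have hAne : A.Nonempty := ⟨u, ⟨le_refl u, huv⟩, hu⟩
  have hAclosed : IsClosed A := by
    apply IsClosed.inter isClosed_Icc
    exact isClosed_le hcont continuous_const
  have hAcomp : IsCompact A := isCompact_Icc.of_isClosed_subset hAclosed (fun τ hτ => hτ.1)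
  set u' := sSup A with hu'
  have hu'A : u' ∈ A := hAcomp.sSup_mem hAne
  have hu'le : u' ≤ v := hu'A.1.2
  have hu'ge : u ≤ u' := hu'A.1.1
  have hu'lt : u' < v := by
    rcases lt_or_eq_of_le hu'le with h | h
    · exact h
    · exfalso; rw [h] at hu'A; linarith [hu'A.2]
  have hout : ∀ τ, u' < τ → τ ≤ v → C < φ τ := by
    intro τ h1 h2
    by_contra hle
    push_neg at hle
    have : τ ∈ A := ⟨⟨le_trans hu'ge h1.le, h2⟩, hle⟩
    have : τ ≤ u' := le_csSup hAcomp.bddAbove this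
    linarith
  have hanti : AntitoneOn φ (Set.Icc u' v) := by
    apply antitoneOn_of_deriv_nonpos (convex_Icc u' v) (hcont.continuousOn)
    · intro τ _; exact (hφ τ).differentiableAt.differentiableWithinAt
    · intro τ hτ
      rw [interior_Icc] at hτ
      rw [(hφ τ).deriv]
      exact hstep τ (lt_of_le_of_lt hu'ge hτ.1) hτ.2.le (hout τ hτ.1 hτ.2.le)
  have := hanti ⟨le_refl u', hu'le⟩ ⟨hu'le, le_refl v⟩ hu'le
  linarith [hu'A.2]

/-- If φ' = f ≤ -1 on [u,v] then φ v ≤ φ u - (v - u). -/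
lemma aux_rate (φ f : ℝ → ℝ) (hφ : ∀ t, HasDerivAt φ (f t) t) (u v : ℝ)
    (huv : u ≤ v) (h : ∀ t, u ≤ t → t ≤ v → f t ≤ -1) : φ v ≤ φ u - (v - u) := by
  set ψ : ℝ → ℝ := fun t => φ t + t with hψ
  have hψd : ∀ t, HasDerivAt ψ (f t + 1) t := fun t => (hφ t).add (hasDerivAt_id t)
  have hcont : Continuous ψ := continuous_iff_continuousAt.2 fun t => (hψd t).continuousAt
  have hanti : AntitoneOn ψ (Set.Icc u v) := by
    apply antitoneOn_of_deriv_nonpos (convex_Icc u v) hcont.continuousOn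
    · intro τ _; exact (hψd τ).differentiableAt.differentiableWithinAt
    · intro τ hτ
      rw [interior_Icc] at hτ
      rw [(hψd τ).deriv]
      linarith [h τ hτ.1.le hτ.2.le]
  have := hanti ⟨le_refl u, huv⟩ ⟨huv, le_refl v⟩ huv
  simp only [ψ] at this
  linarith


set_option maxHeartbeats 2000000 in
lemma aux_key (a ε c Db lam h0 mu X mX cX sig s2 : ℝ) (g H Hd : ℝ → ℝ)
    (ha : 0 < a) (hε : 0 ≤ ε) (hc : 0 < c)
    (hlam1 : 1 ≤ lam)
    (hlamA : ε^2/a + 1 ≤ lam*c/4)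
    (hlamB : Db^2/a + 1 ≤ lam*c/2)
    (hDb0 : 0 ≤ Db)
    (hDelta : ε + mu - lam*h0*a ≤ Db)
    (hh0a : 1/2 ≤ h0) (hh0b : h0 ≤ 1)
    (hmuh0 : mu*h0 = ε + lam*a + 2*a/c) (hmupos : 0 < mu)
    (habsH : ∀ y, |H y| ≤ 1)
    (hHpos : ∀ y, X ≤ y → h0 ≤ H y)
    (hHneg : ∀ y, y ≤ -X → H y ≤ -h0)
    (hHd0 : ∀ y, 0 ≤ Hd y)
    (hHd4 : ∀ y, lam * Hd y ≤ a/4)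
    (hgX : ∀ y, X ≤ y → mX ≤ g y)
    (hgX' : ∀ y, y ≤ -X → g y ≤ -mX)
    (hgband : ∀ y, |y| ≤ X → |g y| ≤ mX)
    (hcX : c ≤ cX) (hmXε : mX - ε = cX)
    (hsig : sig = cX/(2*a))
    (hs2a : 8*(ε+mu+lam*a)/a ≤ s2)
    (hs2b : Real.sqrt (8*(lam*(mX+ε)+1)/a) ≤ s2)
    (hmX0 : 0 ≤ mX) :
    ∀ y s w, |w| ≤ ε → (X ≤ |y| ∨ s2 ≤ |s|) →
      -a*s^2 + s*w - mu*(H y)*s + lam*(Hd y)*s^2 - lam*(H y)*(g y + w - a*s) ≤ -1 := by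
  intro y s w hw hloc
  have hcX0 : 0 < cX := lt_of_lt_of_le hc hcX
  have hw1 : w ≤ ε := (abs_le.1 hw).2
  have hw2 : -ε ≤ w := (abs_le.1 hw).1
  have hlam0 : 0 < lam := lt_of_lt_of_le one_pos hlam1
  have hh00 : 0 < h0 := by linarith
  have hss : (0:ℝ) ≤ s^2 := sq_nonneg s
  have hquad : -a*s^2 + lam*(Hd y)*s^2 ≤ -(a/4)*s^2 := by
    have h1 := mul_le_mul_of_nonneg_right (hHd4 y) (sq_nonneg s)
    have h2 : 0 ≤ a*s^2 := mul_nonneg ha.le (sq_nonneg s)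
    linarith
  have hquad0 : -(a/4)*s^2 ≤ 0 := by nlinarith
  have hsig0 : 0 < sig := by rw [hsig]; positivity
  have hasig : a*sig = cX/2 := by rw [hsig]; field_simp
  have hKc : (0:ℝ) < 2*a/c := by positivity
  have hh1 : c/2 ≤ h0*cX := by
    have := mul_le_mul_of_nonneg_right hh0a hcX0.le
    linarith
  have echain2 : lam*(c/2) ≤ lam*(h0*cX) := mul_le_mul_of_nonneg_left hh1 hlam0.le
  rcases le_or_gt X |y| with hyX | hyX
  · -- outer region
    rcases le_or_gt 0 y with hy0 | hy0
    · -- y ≥ X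
      have hyX' : X ≤ y := by rwa [abs_of_nonneg hy0] at hyX
      have hH1 : h0 ≤ H y := hHpos y hyX'
      have hH2 : H y ≤ 1 := (abs_le.1 (habsH y)).2
      have hH0 : 0 < H y := lt_of_lt_of_le hh00 hH1
      have hg1 : mX ≤ g y := hgX y hyX'
      rcases le_or_gt sig s with hs1 | hs1
      · -- s ≥ sig
        have hs0' : 0 ≤ s := le_trans hsig0.le hs1
        have e1 : s*w ≤ s*ε := mul_le_mul_of_nonneg_left hw1 hs0'
        have e2 : (mu*h0)*s ≤ (mu*(H y))*s :=
          mul_le_mul_of_nonneg_right (mul_le_mul_of_nonneg_left hH1 hmupos.le) hs0'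
        have e3 : -(lam*(H y)*(g y + w - a*s)) ≤ lam*(a*s) := by
          rcases le_or_gt 0 (g y + w - a*s) with hq | hq
          · have h1 : 0 ≤ lam*(H y)*(g y + w - a*s) :=
              mul_nonneg (mul_nonneg hlam0.le hH0.le) hq
            have h2 : 0 ≤ lam*(a*s) := by positivity
            linarith
          · have h2 : lam*(H y)*(a*s - g y - w) ≤ (lam*1)*(a*s - g y - w) :=
              mul_le_mul_of_nonneg_right
                (mul_le_mul_of_nonneg_left hH2 hlam0.le) (by linarith)
            have h3 : lam*(a*s - g y - w) ≤ lam*(a*s) :=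
              mul_le_mul_of_nonneg_left (by linarith) hlam0.le
            linarith
        have e5 : (2*a/c)*sig ≤ (2*a/c)*s := mul_le_mul_of_nonneg_left hs1 hKc.le
        have e6 : (2*a/c)*sig = cX/c := by rw [hsig]; field_simp
        have e7 : (1:ℝ) ≤ cX/c := by rw [le_div_iff₀ hc]; linarith
        have e4 : (mu*h0)*s = s*ε + lam*(a*s) + (2*a/c)*s := by rw [hmuh0]; ring
        linarith
      · rcases le_or_gt 0 s with hs0 | hs0
        · -- 0 ≤ s ≤ sig
          have hq : cX/2 ≤ g y + w - a*s := by
            have h1 : a*s ≤ a*sig := mul_le_mul_of_nonneg_left hs1.le ha.le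
            rw [hasig] at h1
            linarith
          have e3 : (lam*h0)*(cX/2) ≤ (lam*(H y))*(g y + w - a*s) := by
            apply mul_le_mul (mul_le_mul_of_nonneg_left hH1 hlam0.le) hq
              (by positivity) (mul_nonneg hlam0.le hH0.le)
          have e2 : 0 ≤ mu*(H y)*s := mul_nonneg (mul_nonneg hmupos.le hH0.le) hs0
          have e1 : s*w ≤ s*ε := mul_le_mul_of_nonneg_left hw1 hs0
          have epeak : -(a/4)*s^2 + ε*s ≤ ε^2/a := by
            rw [le_div_iff₀ ha]
            nlinarith [sq_nonneg (a*s - 2*ε)]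
          linarith
        · -- s ≤ 0
          have ht0 : 0 ≤ -s := by linarith
          have hq : cX + a*(-s) ≤ g y + w - a*s := by
            have : g y + w - a*s = g y + w + a*(-s) := by ring
            linarith
          have e3 : (lam*h0)*(cX + a*(-s)) ≤ (lam*(H y))*(g y + w - a*s) := by
            have h1 : 0 ≤ a*(-s) := mul_nonneg ha.le ht0
            apply mul_le_mul (mul_le_mul_of_nonneg_left hH1 hlam0.le) hq
              (by linarith) (mul_nonneg hlam0.le hH0.le)
          have e2 : mu*(H y)*(-s) ≤ mu*1*(-s) :=
            mul_le_mul_of_nonneg_right (mul_le_mul_of_nonneg_left hH2 hmupos.le) ht0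
          have e1 : (-s)*(-ε) ≤ (-s)*w := mul_le_mul_of_nonneg_left hw2 ht0
          have hDt : (ε + mu - lam*h0*a)*(-s) ≤ Db*(-s) :=
            mul_le_mul_of_nonneg_right hDelta ht0
          have epeak : -(a/4)*(-s)^2 + Db*(-s) ≤ Db^2/a := by
            rw [le_div_iff₀ ha]
            nlinarith [sq_nonneg (a*(-s) - 2*Db)]
          have hts : s^2 = (-s)^2 := by ring
          linarith
    · -- y ≤ -X
      have hyX' : y ≤ -X := by rw [abs_of_neg hy0] at hyX; linarith
      have hH1 : H y ≤ -h0 := hHneg y hyX'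
      have hH2 : -1 ≤ H y := (abs_le.1 (habsH y)).1
      have hH0 : H y < 0 := lt_of_le_of_lt hH1 (by linarith)
      have hg1 : g y ≤ -mX := hgX' y hyX'
      have hnH1 : h0 ≤ -(H y) := by linarith
      have hnH2 : -(H y) ≤ 1 := by linarith
      rcases le_or_gt s (-sig) with hs1 | hs1
      · -- s ≤ -sig
        have ht1 : sig ≤ -s := by linarith
        have ht0 : (0:ℝ) ≤ -s := le_trans hsig0.le ht1
        have e1 : (-s)*(-ε) ≤ (-s)*w := mul_le_mul_of_nonneg_left hw2 ht0
        have e2 : (mu*h0)*(-s) ≤ (mu*(-(H y)))*(-s) :=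
          mul_le_mul_of_nonneg_right (mul_le_mul_of_nonneg_left hnH1 hmupos.le) ht0
        have e3 : -(lam*(H y)*(g y + w - a*s)) ≤ lam*(a*(-s)) := by
          have hq' : g y + w - a*s ≤ -cX + a*(-s) := by
            have : g y + w - a*s = g y + w + a*(-s) := by ring
            linarith
          rcases le_or_gt (g y + w - a*s) 0 with hq | hq
          · have h2 : 0 ≤ (lam*(-(H y)))*(-(g y + w - a*s)) :=
              mul_nonneg (mul_nonneg hlam0.le (by linarith)) (by linarith)
            have h3 : 0 ≤ lam*(a*(-s)) := mul_nonneg hlam0.le (mul_nonneg ha.le ht0)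
            linarith
          · have h3 : (lam*(-(H y)))*(g y + w - a*s) ≤ (lam*1)*(g y + w - a*s) :=
              mul_le_mul_of_nonneg_right
                (mul_le_mul_of_nonneg_left hnH2 hlam0.le) hq.le
            have h4 : lam*(g y + w - a*s) ≤ lam*(a*(-s)) :=
              mul_le_mul_of_nonneg_left (by linarith) hlam0.le
            linarith
        have e5 : (2*a/c)*sig ≤ (2*a/c)*(-s) := mul_le_mul_of_nonneg_left ht1 hKc.le
        have e6 : (2*a/c)*sig = cX/c := by rw [hsig]; field_simp
        have e7 : (1:ℝ) ≤ cX/c := by rw [le_div_iff₀ hc]; linarith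
        have e4 : (mu*h0)*(-s) = (-s)*ε + lam*(a*(-s)) + (2*a/c)*(-s) := by
          rw [hmuh0]; ring
        linarith
      · rcases le_or_gt s 0 with hs0 | hs0
        · -- -sig ≤ s ≤ 0
          have ht0 : 0 ≤ -s := by linarith
          have htsig : -s ≤ sig := by linarith
          have hq : g y + w - a*s ≤ -(cX/2) := by
            have h1 : a*(-s) ≤ a*sig := mul_le_mul_of_nonneg_left htsig ha.le
            rw [hasig] at h1
            have : g y + w - a*s = g y + w + a*(-s) := by ring
            linarith
          have e3 : (lam*h0)*(cX/2) ≤ (lam*(-(H y)))*(-(g y + w - a*s)) := by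
            apply mul_le_mul (mul_le_mul_of_nonneg_left hnH1 hlam0.le) (by linarith)
              (by positivity) (mul_nonneg hlam0.le (by linarith))
          have e2 : 0 ≤ (mu*(-(H y)))*(-s) :=
            mul_nonneg (mul_nonneg hmupos.le (by linarith)) ht0
          have e1 : (-s)*(-ε) ≤ (-s)*w := mul_le_mul_of_nonneg_left hw2 ht0
          have epeak : -(a/4)*(-s)^2 + ε*(-s) ≤ ε^2/a := by
            rw [le_div_iff₀ ha]
            nlinarith [sq_nonneg (a*(-s) - 2*ε)]
          have hts : s^2 = (-s)^2 := by ring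
          linarith
        · -- 0 < s
          have hq : g y + w - a*s ≤ -(cX + a*s) := by
            have h1 : 0 ≤ a*s := mul_nonneg ha.le hs0.le
            linarith
          have e3 : (lam*h0)*(cX + a*s) ≤ (lam*(-(H y)))*(-(g y + w - a*s)) := by
            have h1 : 0 ≤ a*s := mul_nonneg ha.le hs0.le
            apply mul_le_mul (mul_le_mul_of_nonneg_left hnH1 hlam0.le) (by linarith)
              (by linarith) (mul_nonneg hlam0.le (by linarith))
          have e2 : (mu*(-(H y)))*s ≤ (mu*1)*s :=
            mul_le_mul_of_nonneg_right (mul_le_mul_of_nonneg_left hnH2 hmupos.le) hs0.le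
          have e1 : s*w ≤ s*ε := mul_le_mul_of_nonneg_left hw1 hs0.le
          have hDt : (ε + mu - lam*h0*a)*s ≤ Db*s := mul_le_mul_of_nonneg_right hDelta hs0.le
          have epeak : -(a/4)*s^2 + Db*s ≤ Db^2/a := by
            rw [le_div_iff₀ ha]
            nlinarith [sq_nonneg (a*s - 2*Db)]
          linarith
  · -- band: |y| < X, so s2 ≤ |s|
    have hs : s2 ≤ |s| := by
      rcases hloc with h | h
      · linarith
      · exact h
    have hgb : |g y| ≤ mX := hgband y hyX.le
    have habs : |H y| ≤ 1 := habsH y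
    have habs0 : 0 ≤ |s| := abs_nonneg s
    have e1 : s*w ≤ ε*|s| := by
      calc s*w ≤ |s*w| := le_abs_self _
        _ = |s| * |w| := abs_mul s w
        _ ≤ |s| * ε := mul_le_mul_of_nonneg_left hw habs0
        _ = ε*|s| := by ring
    have e2 : -(mu*(H y)*s) ≤ mu*|s| := by
      calc -(mu*(H y)*s) ≤ |mu*(H y)*s| := neg_le_abs _
        _ = mu*(|H y| * |s|) := by rw [abs_mul, abs_mul, abs_of_pos hmupos]; ring
        _ ≤ mu*(1 * |s|) :=
            mul_le_mul_of_nonneg_left (mul_le_mul_of_nonneg_right habs habs0) hmupos.le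
        _ = mu*|s| := by ring
    have e3 : -(lam*(H y)*(g y + w - a*s)) ≤ lam*(mX + ε + a*|s|) := by
      have hq : |g y + w - a*s| ≤ mX + ε + a*|s| := by
        have h1 : |g y + w - a*s| ≤ |g y + w| + |a*s| := by
          calc |g y + w - a*s| = |(g y + w) + -(a*s)| := by ring_nf
            _ ≤ |g y + w| + |(-(a*s))| := abs_add_le _ _
            _ = |g y + w| + |a*s| := by rw [abs_neg]
        have h2 : |g y + w| ≤ |g y| + |w| := abs_add_le _ _
        have h3 : |a*s| = a*|s| := by rw [abs_mul, abs_of_pos ha]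
        linarith
      calc -(lam*(H y)*(g y + w - a*s)) ≤ |lam*(H y)*(g y + w - a*s)| := neg_le_abs _
        _ = lam*(|H y| * |g y + w - a*s|) := by
            rw [abs_mul, abs_mul, abs_of_pos hlam0]; ring
        _ ≤ lam*(1 * (mX + ε + a*|s|)) := by
            apply mul_le_mul_of_nonneg_left _ hlam0.le
            apply mul_le_mul habs hq (abs_nonneg _) (by norm_num)
        _ = lam*(mX + ε + a*|s|) := by ring
    have k1 : (ε+mu+lam*a)*|s| ≤ (a/8)*s^2 := by
      have h0' : (0:ℝ) ≤ ε+mu+lam*a := by positivity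
      have h1 : 8*(ε+mu+lam*a)/a ≤ |s| := le_trans hs2a hs
      rw [div_le_iff₀ ha] at h1
      have hss2 : s^2 = |s| * |s| := by rw [abs_mul_abs_self s]; ring
      have h5 := mul_le_mul_of_nonneg_left h1 habs0
      rw [hss2]
      nlinarith [h5]
    have k2 : lam*(mX+ε) + 1 ≤ (a/8)*s^2 := by
      have hQ : (0:ℝ) ≤ 8*(lam*(mX+ε)+1)/a := by positivity
      have h1 : Real.sqrt (8*(lam*(mX+ε)+1)/a) ≤ |s| := le_trans hs2b hs
      have h2 : 8*(lam*(mX+ε)+1)/a ≤ s^2 := by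
        have h3 := Real.sq_sqrt hQ
        have h4 : (Real.sqrt (8*(lam*(mX+ε)+1)/a))^2 ≤ |s|^2 :=
          pow_le_pow_left₀ (Real.sqrt_nonneg _) h1 2
        rw [h3, sq_abs] at h4
        exact h4
      rw [div_le_iff₀ ha] at h2
      linarith
    have hIs : a*|s| ≥ 0 := by positivity
    linarith

lemma aux_rth (th y : ℝ) (hth0 : 0 < th) : th ≤ Real.sqrt (th^2+y^2) := by
  have h1 := Real.sqrt_le_sqrt (show th^2 ≤ th^2+y^2 by linarith [sq_nonneg y])
  rwa [Real.sqrt_sq hth0.le] at h1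

lemma aux_Hd4 (a lam th y : ℝ) (ha : 0 < a) (hlam0 : 0 < lam) (hth0 : 0 < th)
    (hth1 : 4*lam/a ≤ th) :
    lam * (th^2/((th^2+y^2)*Real.sqrt (th^2+y^2))) ≤ a/4 := by
  have hden : th^2*th ≤ (th^2+y^2)*Real.sqrt (th^2+y^2) :=
    mul_le_mul (by linarith [sq_nonneg y]) (aux_rth th y hth0) hth0.le (by positivity)
  have h1 : th^2/((th^2+y^2)*Real.sqrt (th^2+y^2)) ≤ th^2/(th^2*th) :=
    div_le_div_of_nonneg_left (by positivity) (by positivity) hden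
  have h2 : th^2/(th^2*th) = 1/th := by field_simp
  have h3 : lam/th ≤ a/4 := by
    rw [div_le_div_iff₀ hth0 (by norm_num : (0:ℝ)<4)]
    rw [div_le_iff₀ ha] at hth1
    linarith
  calc lam * (th^2/((th^2+y^2)*Real.sqrt (th^2+y^2))) ≤ lam * (1/th) := by
        apply mul_le_mul_of_nonneg_left _ hlam0.le
        rw [← h2]; exact h1
    _ = lam/th := by ring
    _ ≤ a/4 := h3

lemma aux_sat_ge (lam th y : ℝ) (hlam0 : 0 < lam) (hth0 : 0 < th) (hy : lam*th ≤ y) :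
    lam/Real.sqrt (1+lam^2) ≤ y / Real.sqrt (th^2+y^2) := by
  have hy0 : 0 < y := lt_of_lt_of_le (by positivity) hy
  have hpos : (0:ℝ) < th^2 + y^2 := by positivity
  have hrpos : 0 < Real.sqrt (th^2+y^2) := Real.sqrt_pos.2 hpos
  have hrsq : (Real.sqrt (th^2+y^2))^2 = th^2+y^2 := Real.sq_sqrt hpos.le
  have hS0 : 0 < Real.sqrt (1+lam^2) := Real.sqrt_pos.2 (by positivity)
  have hS2 : (Real.sqrt (1+lam^2))^2 = 1+lam^2 := Real.sq_sqrt (by positivity)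
  rw [div_le_div_iff₀ hS0 hrpos]
  have h1 : (lam*th)^2 ≤ y^2 := pow_le_pow_left₀ (by positivity) hy 2
  have e1 : (lam*Real.sqrt (th^2+y^2))^2 = lam^2*(th^2+y^2) := by rw [mul_pow, hrsq]
  have e2 : (y*Real.sqrt (1+lam^2))^2 = y^2*(1+lam^2) := by rw [mul_pow, hS2]
  have hsq : (lam*Real.sqrt (th^2+y^2))^2 ≤ (y*Real.sqrt (1+lam^2))^2 := by nlinarith
  have h5 := Real.sqrt_le_sqrt hsq
  rw [Real.sqrt_sq (by positivity), Real.sqrt_sq (by positivity)] at h5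
  exact h5

lemma aux_Ub (mu lam th C1 C2 y s Gy Hy B : ℝ) (hmupos : 0 < mu) (hlam0 : 0 < lam)
    (hth0 : 0 < th) (hC1 : 0 < C1) (hy : |y| ≤ C1) (hC2 : 0 ≤ C2) (hs : |s| ≤ C2)
    (hG : Gy ≤ B) (hH : |Hy| ≤ 1) :
    s^2/2 + Gy + mu*(Real.sqrt (th^2+y^2) - th) - lam*(s*Hy)
      ≤ C2^2/2 + B + mu*C1 + lam*C2 := by
  have b1 : s^2 ≤ C2^2 := by
    have := mul_le_mul hs hs (abs_nonneg s) hC2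
    have h2 : |s| * |s| = s^2 := by rw [abs_mul_abs_self]; ring
    nlinarith
  have b3 : Real.sqrt (th^2+y^2) ≤ th + C1 := by
    have h4 : Real.sqrt (th^2+y^2) ≤ Real.sqrt ((th+C1)^2) := by
      apply Real.sqrt_le_sqrt
      have h5 := mul_le_mul hy hy (abs_nonneg y) hC1.le
      have h6 : |y| * |y| = y^2 := by rw [abs_mul_abs_self]; ring
      have h7 : 0 ≤ th*C1 := mul_nonneg hth0.le hC1.le
      nlinarith
    rwa [Real.sqrt_sq (by positivity)] at h4
  have b3' : mu*(Real.sqrt (th^2+y^2) - th) ≤ mu*C1 :=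
    mul_le_mul_of_nonneg_left (by linarith) hmupos.le
  have b4 : -(lam*(s*Hy)) ≤ lam*C2 := by
    calc -(lam*(s*Hy)) ≤ |lam*(s*Hy)| := neg_le_abs _
      _ = lam*(|s| * |Hy|) := by rw [abs_mul, abs_mul, abs_of_pos hlam0]
      _ ≤ lam*(C2*1) := by
          apply mul_le_mul_of_nonneg_left _ hlam0.le
          exact mul_le_mul hs hH (abs_nonneg _) hC2
      _ = lam*C2 := by ring
  linarith

lemma aux_final (mu lam th Om y s Gy Hy : ℝ) (hmupos : 0 < mu) (hlam0 : 0 < lam)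
    (hth0 : 0 < th) (hOm0 : 0 ≤ Om) (hG : 0 ≤ Gy) (hH : |Hy| ≤ 1)
    (hU : s^2/2 + Gy + mu*(Real.sqrt (th^2+y^2) - th) - lam*(s*Hy) ≤ Om) :
    |s| ≤ 2*Real.sqrt (Om+lam^2) ∧ |y| ≤ th + (Om+lam^2)/mu := by
  have hOl0 : 0 ≤ Om + lam^2 := by positivity
  have hsqge : th ≤ Real.sqrt (th^2+y^2) := aux_rth th y hth0
  have hH2 : Hy^2 ≤ 1 := by
    have := mul_le_mul hH hH (abs_nonneg Hy) zero_le_one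
    have h2 : |Hy| * |Hy| = Hy^2 := by rw [abs_mul_abs_self]; ring
    nlinarith
  have hcross : lam*(s*Hy) ≤ lam*|s| := by
    calc lam*(s*Hy) ≤ |lam*(s*Hy)| := le_abs_self _
      _ = lam*(|s| * |Hy|) := by rw [abs_mul, abs_mul, abs_of_pos hlam0]
      _ ≤ lam*(|s| * 1) := by
          apply mul_le_mul_of_nonneg_left _ hlam0.le
          exact mul_le_mul_of_nonneg_left hH (abs_nonneg _)
      _ = lam*|s| := by ring
  have q2 : 0 ≤ mu*(Real.sqrt (th^2+y^2) - th) := mul_nonneg hmupos.le (by linarith)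
  constructor
  · -- |s| bound
    have q3 : s^2/4 - lam^2 ≤ s^2/2 - lam*|s| := by
      have h1 := sq_nonneg (|s| - 2*lam)
      have h2 : |s|^2 = s^2 := sq_abs s
      nlinarith
    have h1 : s^2 ≤ 4*(Om + lam^2) := by nlinarith
    have h3 : |s| = Real.sqrt (s^2) := (Real.sqrt_sq_eq_abs _).symm
    have h4 : Real.sqrt (s^2) ≤ Real.sqrt (4*(Om+lam^2)) := Real.sqrt_le_sqrt h1
    have h5 : Real.sqrt (4*(Om+lam^2)) = 2*Real.sqrt (Om+lam^2) := by
      rw [show (4:ℝ)*(Om+lam^2) = 2^2*(Om+lam^2) by norm_num,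
        Real.sqrt_mul (by positivity), Real.sqrt_sq (by norm_num)]
    rw [h3, ← h5]; exact h4
  · -- |y| bound
    have q4 : s^2/2 - lam*(s*Hy) ≥ -lam^2 := by
      have h1 := sq_nonneg (s - lam*Hy)
      have h2 : lam^2*Hy^2 ≤ lam^2*1 := mul_le_mul_of_nonneg_left hH2 (sq_nonneg lam)
      nlinarith
    have h1 : mu*(Real.sqrt (th^2+y^2) - th) ≤ Om + lam^2 := by linarith
    have h2 : Real.sqrt (th^2+y^2) - th ≤ (Om+lam^2)/mu := by
      rw [le_div_iff₀ hmupos]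
      nlinarith
    have h3 : |y| ≤ Real.sqrt (th^2+y^2) := by
      rw [show |y| = Real.sqrt (y^2) from (Real.sqrt_sq_eq_abs _).symm]
      exact Real.sqrt_le_sqrt (by linarith [sq_nonneg th])
    linarith

set_option maxHeartbeats 3000000 in
theorem stmt_19 (a ε δ r : ℝ) (ha : 0 < a) (hε : 0 ≤ ε) (hδ : 0 < δ) (hr : 0 < r)
    (g : ℝ → ℝ) (hg : Continuous g)
    (hsign : ∀ x : ℝ, 0 ≤ x * g x)
    (hmono : ∀ x y : ℝ, |x| ≤ |y| → |g x| ≤ |g y|)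
    (hbig : ∀ x : ℝ, δ < |x| → ε < |g x|)
    (V : ℝ × ℝ → ℝ) (hV : ContDiff ℝ 1 V)
    (hrad : Filter.Tendsto V (Bornology.cobounded (ℝ × ℝ)) Filter.atTop)
    (hdec : ∀ (x₂ x₃ v : ℝ → ℝ),
      (∀ t, HasDerivAt x₂ (-(x₃ t)) t) →
      (∀ t, HasDerivAt x₃ (-a * x₃ t + v t) t) →
      (∀ t, |v t - g (x₂ t)| ≤ ε) →
      ∀ t, r ≤ ‖(x₂ t, x₃ t)‖ → deriv (fun s => V (x₂ s, x₃ s)) t ≤ 0) :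
    ∃ ε' > 0, ∀ δ' > 0, ∃ T ≥ 0, ∀ (x₂ x₃ v : ℝ → ℝ) (t₀ : ℝ),
      (∀ t, HasDerivAt x₂ (-(x₃ t)) t) →
      (∀ t, HasDerivAt x₃ (-a * x₃ t + v t) t) →
      (∀ t, |v t - g (x₂ t)| ≤ ε) →
      ‖(x₂ t₀, x₃ t₀)‖ ≤ δ' →
      ∀ t ≥ t₀ + T, ‖(x₂ t, x₃ t)‖ ≤ ε' := by
  clear hdec hrad hV hr
  -- ## constants
  have hδ1 : (0:ℝ) < δ + 1 := by linarith
  have hm : ε < |g (δ+1)| := hbig (δ+1) (by rw [abs_of_pos hδ1]; linarith)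
  obtain ⟨c, hcdef⟩ : ∃ x:ℝ, x = |g (δ+1)| - ε := ⟨_, rfl⟩
  have hc : 0 < c := by rw [hcdef]; linarith
  have hgc : |g (δ+1)| = ε + c := by rw [hcdef]; ring
  obtain ⟨Db, hDbdef⟩ : ∃ x:ℝ, x = 3*ε + 4*a/c + a := ⟨_, rfl⟩
  have hDb0 : 0 ≤ Db := by rw [hDbdef]; positivity
  obtain ⟨lam, hlamdef⟩ : ∃ x:ℝ, x = 1 + (4/c)*(ε^2/a + 1) + (2/c)*(Db^2/a + 1) := ⟨_, rfl⟩
  have hA0 : 0 ≤ (4/c)*(ε^2/a + 1) := by positivity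
  have hB0 : 0 ≤ (2/c)*(Db^2/a + 1) := by positivity
  have hlam1 : 1 ≤ lam := by rw [hlamdef]; linarith
  have hlam0 : 0 < lam := by linarith
  have hlc : lam*c = c + 4*(ε^2/a+1) + 2*(Db^2/a+1) := by
    rw [hlamdef]; field_simp
  have hlamA : ε^2/a + 1 ≤ lam*c/4 := by
    have h1 : 0 ≤ ε^2/a + 1 := by positivity
    have h2 : 0 ≤ Db^2/a + 1 := by positivity
    rw [hlc] at *; linarith
  have hlamB : Db^2/a + 1 ≤ lam*c/2 := by
    have h1 : 0 ≤ ε^2/a + 1 := by positivity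
    have h2 : 0 ≤ Db^2/a + 1 := by positivity
    linarith [hlc]
  obtain ⟨S, hSdef⟩ : ∃ x:ℝ, x = Real.sqrt (1 + lam^2) := ⟨_, rfl⟩
  have hS0 : 0 < S := hSdef ▸ Real.sqrt_pos.2 (by positivity)
  have hS2 : S^2 = 1 + lam^2 := by rw [hSdef]; exact Real.sq_sqrt (by positivity)
  have hS1 : 1 ≤ S := by nlinarith
  have hS2l : S ≤ 2*lam := by nlinarith
  obtain ⟨h0, h0def⟩ : ∃ x:ℝ, x = lam/S := ⟨_, rfl⟩
  have hh00 : 0 < h0 := by rw [h0def]; positivity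
  have hh0b : h0 ≤ 1 := by rw [h0def, div_le_one hS0]; nlinarith
  have hh0a : 1/2 ≤ h0 := by rw [h0def, le_div_iff₀ hS0]; linarith
  obtain ⟨th, hthdef⟩ : ∃ x:ℝ, x = max (4*lam/a) (δ+1) := ⟨_, rfl⟩
  have hth1 : 4*lam/a ≤ th := hthdef ▸ le_max_left _ _
  have hth2 : δ+1 ≤ th := hthdef ▸ le_max_right _ _
  have hth0 : 0 < th := lt_of_lt_of_le hδ1 hth2
  obtain ⟨X, hXdef⟩ : ∃ x:ℝ, x = lam*th := ⟨_, rfl⟩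
  have hX0 : 0 < X := by rw [hXdef]; positivity
  have hX1 : δ+1 ≤ X := by
    have := mul_le_mul_of_nonneg_right hlam1 hth0.le
    rw [hXdef]; nlinarith
  -- ## mu and Delta facts
  obtain ⟨mu, hmudef⟩ : ∃ x:ℝ, x = (ε + lam*a + 2*a/c)/h0 := ⟨_, rfl⟩
  have hmupos : 0 < mu := by
    rw [hmudef]; apply div_pos _ hh00; positivity
  have hmuh0 : mu*h0 = ε + lam*a + 2*a/c := by
    rw [hmudef]; field_simp
  have hq3 : lam/h0 - lam*h0 = 1/S := by
    have hlamne : lam ≠ 0 := ne_of_gt hlam0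
    have hSne : S ≠ 0 := ne_of_gt hS0
    have e1 : lam/h0 = S := by rw [h0def]; field_simp
    have e2 : lam*h0 = lam^2/S := by rw [h0def]; ring
    rw [e1, e2]
    field_simp
    linear_combination hS2
  have hqe : mu = (ε + 2*a/c)/h0 + a*(lam/h0) := by
    rw [hmudef]
    field_simp
    ring
  have hq4 : 1/S ≤ 1 := by rw [div_le_one hS0]; linarith
  have hq7 : a*(lam/h0) - a*(lam*h0) = a*(1/S) := by rw [← mul_sub, hq3]
  have hq6 : a*(1/S) ≤ a*1 := mul_le_mul_of_nonneg_left hq4 ha.le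
  have hq8 : (ε + 2*a/c)/h0 ≤ (ε + 2*a/c)/(1/2) := by
    apply div_le_div_of_nonneg_left (by positivity) (by norm_num) hh0a
  have hq9 : (ε + 2*a/c)/(1/2) = 2*(ε+2*a/c) := by ring
  have hDelta : ε + mu - lam*h0*a ≤ Db := by
    rw [hDbdef]
    ring_nf at hqe hq7 hq6 hq8 hq9 ⊢
    linarith [hqe, hq7, hq6, hq8, hq9]
  -- ## the saturation function H and its derivative Hd
  obtain ⟨H, hHdef⟩ : ∃ F : ℝ → ℝ, F = fun y => y / Real.sqrt (th^2 + y^2) := ⟨_, rfl⟩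
  obtain ⟨Hd, hHddef⟩ : ∃ F : ℝ → ℝ, F = fun y => th^2/((th^2+y^2)*Real.sqrt (th^2+y^2)) :=
    ⟨_, rfl⟩
  have habsH : ∀ y, |H y| ≤ 1 := by
    intro y; rw [hHdef]; exact aux_sat_le_one th y hth0
  have hHderiv : ∀ y, HasDerivAt H (Hd y) y := by
    intro y; rw [hHdef, hHddef]; exact aux_hasDerivAt_sat th y hth0
  have hHd0 : ∀ y, 0 ≤ Hd y := by
    intro y; rw [hHddef]; positivity
  have hrth : ∀ y : ℝ, th ≤ Real.sqrt (th^2+y^2) := fun y => aux_rth th y hth0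
  have hHd4 : ∀ y, lam * Hd y ≤ a/4 := by
    intro y
    simp only [hHddef]
    exact aux_Hd4 a lam th y ha hlam0 hth0 hth1
  have hHpos : ∀ y, X ≤ y → h0 ≤ H y := by
    intro y hy
    rw [hXdef] at hy
    simp only [hHdef]
    rw [h0def, hSdef]
    exact aux_sat_ge lam th y hlam0 hth0 hy
  have hHneg : ∀ y, y ≤ -X → H y ≤ -h0 := by
    intro y hy
    have h := hHpos (-y) (by linarith)
    simp only [hHdef] at h ⊢
    have h2 : (-y) / Real.sqrt (th^2 + (-y)^2) = -(y / Real.sqrt (th^2 + y^2)) := by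
      rw [show th^2+(-y)^2 = th^2+y^2 by ring, neg_div]
    rw [h2] at h
    linarith
  -- ## g facts
  have hg0 : ∀ y : ℝ, 0 < y → 0 ≤ g y := by
    intro y hy
    by_contra hcon
    push_neg at hcon
    exact absurd (hsign y) (not_le.2 (mul_neg_of_pos_of_neg hy hcon))
  have hg0' : ∀ y : ℝ, y < 0 → g y ≤ 0 := by
    intro y hy
    by_contra hcon
    push_neg at hcon
    exact absurd (hsign y) (not_le.2 (mul_neg_of_neg_of_pos hy hcon))
  obtain ⟨mX, hmXdef⟩ : ∃ x:ℝ, x = |g X| := ⟨_, rfl⟩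
  have hmX0 : 0 ≤ mX := hmXdef ▸ abs_nonneg _
  have hmmX : ε + c ≤ mX := by
    rw [hmXdef, ← hgc]
    apply hmono
    rw [abs_of_pos hδ1, abs_of_pos hX0]; linarith
  have hgX : ∀ y, X ≤ y → mX ≤ g y := by
    intro y hy
    have hy0 : 0 < y := lt_of_lt_of_le hX0 hy
    have h1 : |g X| ≤ |g y| := hmono X y (by rw [abs_of_pos hX0, abs_of_pos hy0]; linarith)
    rw [abs_of_nonneg (hg0 y hy0)] at h1
    rw [hmXdef]; linarith
  have hgX' : ∀ y, y ≤ -X → g y ≤ -mX := by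
    intro y hy
    have hy0 : y < 0 := by linarith
    have h1 : |g X| ≤ |g y| := hmono X y (by rw [abs_of_pos hX0, abs_of_neg hy0]; linarith)
    rw [abs_of_nonpos (hg0' y hy0)] at h1
    rw [hmXdef]; linarith
  have hgband : ∀ y, |y| ≤ X → |g y| ≤ mX := by
    intro y hy
    rw [hmXdef]
    exact hmono y X (by rwa [abs_of_pos hX0])
  obtain ⟨cX, hcXdef⟩ : ∃ x:ℝ, x = mX - ε := ⟨_, rfl⟩
  have hcX : c ≤ cX := by rw [hcXdef]; linarith
  have hmXε : mX - ε = cX := hcXdef.symm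
  obtain ⟨sig, hsigdef⟩ : ∃ x:ℝ, x = cX/(2*a) := ⟨_, rfl⟩
  obtain ⟨s2, hs2def⟩ :
      ∃ x:ℝ, x = 8*(ε+mu+lam*a)/a + Real.sqrt (8*(lam*(mX+ε)+1)/a) := ⟨_, rfl⟩
  have hs2a : 8*(ε+mu+lam*a)/a ≤ s2 := by
    rw [hs2def]; exact le_add_of_nonneg_right (Real.sqrt_nonneg _)
  have hs2b : Real.sqrt (8*(lam*(mX+ε)+1)/a) ≤ s2 := by
    rw [hs2def]; exact le_add_of_nonneg_left (by positivity)
  have hs20 : 0 ≤ s2 := le_trans (by positivity) hs2a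
  -- ## the key derivative estimate
  have key := aux_key a ε c Db lam h0 mu X mX cX sig s2 g H Hd ha hε hc hlam1 hlamA hlamB
    hDb0 hDelta hh0a hh0b hmuh0 hmupos habsH hHpos hHneg hHd0 hHd4 hgX hgX' hgband hcX hmXε
    hsigdef hs2a hs2b hmX0
  -- ## the primitive G of g
  obtain ⟨G, hGdef⟩ : ∃ F : ℝ → ℝ, F = fun y => ∫ t in (0:ℝ)..y, g t := ⟨_, rfl⟩
  have hGd : ∀ y, HasDerivAt G (g y) y := by
    intro y
    rw [hGdef]
    exact intervalIntegral.integral_hasDerivAt_right (hg.intervalIntegrable _ _)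
      (hg.stronglyMeasurableAtFilter _ _) hg.continuousAt
  have hgzero : g 0 = 0 := by
    have ht1 : Filter.Tendsto g (nhdsWithin 0 (Set.Ioi 0)) (nhds (g 0)) :=
      (hg.continuousAt).continuousWithinAt
    have ht2 : Filter.Tendsto g (nhdsWithin 0 (Set.Iio 0)) (nhds (g 0)) :=
      (hg.continuousAt).continuousWithinAt
    have h1 : (0:ℝ) ≤ g 0 := by
      apply ge_of_tendsto ht1
      exact Filter.eventually_of_mem self_mem_nhdsWithin (fun x hx => hg0 x hx)
    have h2 : g 0 ≤ 0 := by
      apply le_of_tendsto ht2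
      exact Filter.eventually_of_mem self_mem_nhdsWithin (fun x hx => hg0' x hx)
    linarith
  have hGpos : ∀ y, 0 ≤ G y := by
    intro y
    simp only [hGdef]
    rcases le_or_gt 0 y with h | h
    · apply intervalIntegral.integral_nonneg h
      intro u hu
      rcases eq_or_lt_of_le hu.1 with h2 | h2
      · rw [← h2, hgzero]
      · exact hg0 u h2
    · have h1 : (∫ t in (0:ℝ)..y, g t) = -∫ t in y..(0:ℝ), g t := by
        rw [intervalIntegral.integral_symm]
      have h2 : (0:ℝ) ≤ ∫ t in y..(0:ℝ), -g t := by
        apply intervalIntegral.integral_nonneg h.le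
        intro u hu
        rcases eq_or_lt_of_le hu.2 with h3 | h3
        · rw [h3, hgzero]; norm_num
        · simp only [neg_nonneg]; exact hg0' u h3
      have h3 : (∫ t in y..(0:ℝ), -g t) = -∫ t in y..(0:ℝ), g t :=
        intervalIntegral.integral_neg
      rw [h1]; linarith
  have hGbound : ∀ (C y : ℝ), 0 < C → |y| ≤ C → |G y| ≤ C * |g C| := by
    intro C y hC hyC
    simp only [hGdef]
    have h1 : ∀ x ∈ Set.uIoc (0:ℝ) y, ‖g x‖ ≤ |g C| := by
      intro x hx
      rw [Real.norm_eq_abs]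
      apply hmono
      rw [abs_of_pos hC]
      have hy1 : y ≤ C := le_trans (le_abs_self y) hyC
      have hy2 : -C ≤ y := neg_le_of_abs_le hyC
      rcases Set.mem_uIoc.1 hx with h | h
      · rw [abs_le]; constructor <;> [linarith [h.1, h.2]; linarith [h.1, h.2]]
      · rw [abs_le]; constructor <;> [linarith [h.1, h.2]; linarith [h.1, h.2]]
    have h2 := intervalIntegral.norm_integral_le_of_norm_le_const h1
    rw [Real.norm_eq_abs] at h2
    have h3 : |y - 0| = |y| := by simp
    rw [h3] at h2
    calc |∫ t in (0:ℝ)..y, g t| ≤ |g C| * |y| := h2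
      _ ≤ |g C| * C := mul_le_mul_of_nonneg_left hyC (abs_nonneg _)
      _ = C * |g C| := by ring
  -- ## the ultimate bound
  obtain ⟨Om, hOmdef⟩ : ∃ x:ℝ, x = s2^2/2 + X*|g X| + mu*X + lam*s2 := ⟨_, rfl⟩
  have hOm0 : 0 ≤ Om := by
    rw [hOmdef]
    have q1 : 0 ≤ X*|g X| := mul_nonneg hX0.le (abs_nonneg _)
    have q2 : 0 ≤ mu*X := mul_nonneg hmupos.le hX0.le
    have q3 : 0 ≤ lam*s2 := mul_nonneg hlam0.le hs20
    linarith [sq_nonneg s2]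
  have hOl0 : 0 ≤ Om + lam^2 := by linarith [sq_nonneg lam]
  obtain ⟨eps', hepsdef⟩ :
      ∃ x:ℝ, x = 2*Real.sqrt (Om + lam^2) + th + (Om + lam^2)/mu + 1 := ⟨_, rfl⟩
  have heps0 : 0 < eps' := by
    rw [hepsdef]
    have q1 : 0 ≤ Real.sqrt (Om+lam^2) := Real.sqrt_nonneg _
    have q2 : 0 ≤ (Om+lam^2)/mu := div_nonneg hOl0 hmupos.le
    linarith [hth0]
  refine ⟨eps', heps0, ?_⟩
  intro δ' hδ'
  obtain ⟨U0, hU0def⟩ : ∃ x:ℝ, x = δ'^2/2 + δ'*|g δ'| + mu*δ' + lam*δ' := ⟨_, rfl⟩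
  refine ⟨max 0 (U0 - Om), le_max_left _ _, ?_⟩
  intro x₂ x₃ v t₀ hx₂ hx₃ hv hinit t ht
  have hTnn : (0:ℝ) ≤ max 0 (U0 - Om) := le_max_left _ _
  have hTge : U0 - Om ≤ max 0 (U0 - Om) := le_max_right _ _
  obtain ⟨w, hwdef⟩ : ∃ F : ℝ → ℝ, F = fun τ => v τ - g (x₂ τ) := ⟨_, rfl⟩
  have hwbound : ∀ τ, |w τ| ≤ ε := by intro τ; rw [hwdef]; exact hv τ
  obtain ⟨φ, hφdef⟩ : ∃ F : ℝ → ℝ, F = fun τ =>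
      (x₃ τ)^2/2 + G (x₂ τ) + mu*(Real.sqrt (th^2+(x₂ τ)^2) - th)
        - lam*((x₃ τ)*(H (x₂ τ))) := ⟨_, rfl⟩
  obtain ⟨Df, hDfdef⟩ : ∃ F : ℝ → ℝ, F = fun τ =>
      -a*(x₃ τ)^2 + (x₃ τ)*(w τ) - mu*(H (x₂ τ))*(x₃ τ) + lam*(Hd (x₂ τ))*(x₃ τ)^2
        - lam*(H (x₂ τ))*(g (x₂ τ) + w τ - a*(x₃ τ)) := ⟨_, rfl⟩
  have hφd : ∀ τ, HasDerivAt φ (Df τ) τ := by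
    intro τ
    have d1 : HasDerivAt (fun u => (x₃ u)^2/2) ((x₃ τ)*(-a*(x₃ τ) + v τ)) τ := by
      have h := ((hx₃ τ).pow 2).div_const 2
      refine h.congr_deriv ?_
      ring
    have d2 : HasDerivAt (fun u => G (x₂ u)) ((g (x₂ τ))*(-(x₃ τ))) τ :=
      (hGd (x₂ τ)).comp τ (hx₂ τ)
    have d3 : HasDerivAt (fun u => mu*(Real.sqrt (th^2+(x₂ u)^2) - th))
        (mu*(((x₂ τ)/Real.sqrt (th^2+(x₂ τ)^2))*(-(x₃ τ)))) τ :=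
      (((aux_hasDerivAt_sqrtcomp th (x₂ τ) hth0).comp τ (hx₂ τ)).sub_const th).const_mul mu
    have d4 : HasDerivAt (fun u => lam*((x₃ u)*(H (x₂ u))))
        (lam*((-a*(x₃ τ) + v τ)*(H (x₂ τ)) + (x₃ τ)*((Hd (x₂ τ))*(-(x₃ τ))))) τ := by
      have hH' : HasDerivAt (fun u => H (x₂ u)) ((Hd (x₂ τ))*(-(x₃ τ))) τ :=
        (hHderiv (x₂ τ)).comp τ (hx₂ τ)
      exact ((hx₃ τ).mul hH').const_mul lam
    have dall := ((d1.add d2).add d3).sub d4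
    rw [hφdef, hDfdef]
    refine dall.congr_deriv ?_
    simp only [hwdef, hHdef]
    ring
  have hKbound : ∀ τ, |x₂ τ| ≤ X → |x₃ τ| ≤ s2 → φ τ ≤ Om := by
    intro τ h1 h2
    rw [hφdef, hOmdef]
    exact aux_Ub mu lam th X s2 (x₂ τ) (x₃ τ) (G (x₂ τ)) (H (x₂ τ)) (X*|g X|)
      hmupos hlam0 hth0 hX0 h1 hs20 h2
      (le_trans (le_abs_self _) (hGbound X (x₂ τ) hX0 h1)) (habsH _)
  have hstep : ∀ τ, Om < φ τ → Df τ ≤ -1 := by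
    intro τ hΩ
    have hloc : X ≤ |x₂ τ| ∨ s2 ≤ |x₃ τ| := by
      by_contra hcon
      push_neg at hcon
      exact absurd (hKbound τ hcon.1.le hcon.2.le) (not_le.2 hΩ)
    have h := key (x₂ τ) (x₃ τ) (w τ) (hwbound τ) hloc
    rw [hDfdef]
    exact h
  have hi2 : |x₂ t₀| ≤ δ' := by
    have h := hinit
    rw [Prod.norm_def] at h
    simp only [Real.norm_eq_abs] at h
    exact le_trans (le_max_left _ _) h
  have hi3 : |x₃ t₀| ≤ δ' := by
    have h := hinit
    rw [Prod.norm_def] at h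
    simp only [Real.norm_eq_abs] at h
    exact le_trans (le_max_right _ _) h
  have hφt₀ : φ t₀ ≤ U0 := by
    rw [hφdef, hU0def]
    exact aux_Ub mu lam th δ' δ' (x₂ t₀) (x₃ t₀) (G (x₂ t₀)) (H (x₂ t₀)) (δ'*|g δ'|)
      hmupos hlam0 hth0 hδ' hi2 hδ'.le hi3
      (le_trans (le_abs_self _) (hGbound δ' (x₂ t₀) hδ' hi2)) (habsH _)
  -- find a time where φ ≤ Om
  have hexists : ∃ τs, τs ∈ Set.Icc t₀ (t₀ + max 0 (U0-Om)) ∧ φ τs ≤ Om := by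
    by_cases hex : ∃ τ ∈ Set.Icc t₀ (t₀ + max 0 (U0-Om)), φ τ ≤ Om
    · obtain ⟨τ, h1, h2⟩ := hex; exact ⟨τ, h1, h2⟩
    · push_neg at hex
      have hrt := aux_rate φ Df hφd t₀ (t₀ + max 0 (U0-Om)) (by linarith)
        (fun τ h1 h2 => hstep τ (hex τ ⟨h1, h2⟩))
      have h6 := hex (t₀ + max 0 (U0-Om)) ⟨by linarith, le_refl _⟩
      exfalso
      linarith
  obtain ⟨τs, hτs1, hτs2⟩ := hexists
  have hfin : φ t ≤ Om := by
    apply aux_inv φ Df hφd Om τs t (le_trans hτs1.2 (by linarith)) hτs2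
    intro u _ _ hgt
    linarith [hstep u hgt]
  -- extract coordinate bounds
  have hext := aux_final mu lam th Om (x₂ t) (x₃ t) (G (x₂ t)) (H (x₂ t))
    hmupos hlam0 hth0 hOm0 (hGpos _) (habsH _) (by rw [hφdef] at hfin; exact hfin)
  have hx3f : |x₃ t| ≤ eps' := by
    rw [hepsdef]
    have h6 : 0 ≤ (Om+lam^2)/mu := div_nonneg hOl0 hmupos.le
    linarith [hext.1, hth0]
  have hx2f : |x₂ t| ≤ eps' := by
    rw [hepsdef]
    linarith [hext.2, Real.sqrt_nonneg (Om+lam^2)]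
  rw [Prod.norm_def]
  simp only [Real.norm_eq_abs]
  exact max_le hx2f hx3f
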